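/- Local Plücker formula for n = 1: if F₀ = (f₀, f₁) with f₀, f₁ holomorphic, and F₁ = f₀f₁' − f₀'f₁, then on the set where F₀ ≠ 0, Δ log|F₀|² = 4|F₁|²/|F₀|⁴, where |F₀|² = |f₀|² + |f₁|². -/

import Mathlib

/-- The Laplacian `∂²/∂x² + ∂²/∂y²` of a function on `ℂ ≅ ℝ²`. -/
noncomputable def lap (u : ℂ → ℝ) (z : ℂ) : ℝ :=
  iteratedDeriv 2 (fun x : ℝ => u (z + x)) 0 +
  iteratedDeriv 2 (fun y : ℝ => u (z + y * Complex.I)) 0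

open Complex RealInnerProductSpace in
private lemma line_hasDerivAt (z v : ℂ) (t : ℝ) :
    HasDerivAt (fun t : ℝ => z + t * v) v t := by
  have h : HasDerivAt (fun t : ℝ => (t : ℂ)) 1 t := Complex.ofRealCLM.hasDerivAt
  simpa using (h.mul_const v).const_add z

open Complex RealInnerProductSpace in
private lemma comp_line_hasDerivAt {U : Set ℂ} {f : ℂ → ℂ} (hf : AnalyticOnNhd ℂ f U)
    (z v : ℂ) (t : ℝ) (ht : z + t * v ∈ U) :
    HasDerivAt (fun t : ℝ => f (z + t * v)) (v * deriv f (z + t * v)) t := by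
  have h1 : HasDerivAt f (deriv f (z + t * v)) (z + t * v) :=
    (hf _ ht).differentiableAt.hasDerivAt
  simpa [Function.comp_def] using HasDerivAt.scomp t h1 (line_hasDerivAt z v t)

open Complex RealInnerProductSpace in
private lemma dir2 {U : Set ℂ} (hU : IsOpen U) {f₀ f₁ : ℂ → ℂ}
    (hf₀ : AnalyticOnNhd ℂ f₀ U) (hf₁ : AnalyticOnNhd ℂ f₁ U)
    {z : ℂ} (hz : z ∈ U) (v : ℂ)
    (hne : ‖f₀ z‖ ^ 2 + ‖f₁ z‖ ^ 2 ≠ 0) :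
    iteratedDeriv 2 (fun t : ℝ => Real.log (‖f₀ (z + t * v)‖ ^ 2 + ‖f₁ (z + t * v)‖ ^ 2)) 0
      = ((2 * ⟪f₀ z, v * (v * deriv (deriv f₀) z)⟫ + 2 * ⟪v * deriv f₀ z, v * deriv f₀ z⟫
          + (2 * ⟪f₁ z, v * (v * deriv (deriv f₁) z)⟫ + 2 * ⟪v * deriv f₁ z, v * deriv f₁ z⟫))
          * (‖f₀ z‖ ^ 2 + ‖f₁ z‖ ^ 2)
        - (2 * ⟪f₀ z, v * deriv f₀ z⟫ + 2 * ⟪f₁ z, v * deriv f₁ z⟫) ^ 2)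
        / (‖f₀ z‖ ^ 2 + ‖f₁ z‖ ^ 2) ^ 2 := by
  have hd₀ : AnalyticOnNhd ℂ (deriv f₀) U := hf₀.deriv
  have hd₁ : AnalyticOnNhd ℂ (deriv f₁) U := hf₁.deriv
  set S : Set ℝ := {t : ℝ | z + t * v ∈ U} with hSdef
  have hS : IsOpen S := hU.preimage (by fun_prop)
  have h0 : (0 : ℝ) ∈ S := by simp [hSdef, hz]
  set N : ℝ → ℝ := fun t => ‖f₀ (z + t * v)‖ ^ 2 + ‖f₁ (z + t * v)‖ ^ 2 with hNdef
  set N₁ : ℝ → ℝ := fun t => 2 * ⟪f₀ (z + t * v), v * deriv f₀ (z + t * v)⟫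
      + 2 * ⟪f₁ (z + t * v), v * deriv f₁ (z + t * v)⟫ with hN₁def
  have hN : ∀ t ∈ S, HasDerivAt N (N₁ t) t := fun t ht =>
    ((comp_line_hasDerivAt hf₀ z v t ht).norm_sq).add ((comp_line_hasDerivAt hf₁ z v t ht).norm_sq)
  have hz0 : z + (0 : ℝ) * v = z := by simp
  have hN0 : N 0 = ‖f₀ z‖ ^ 2 + ‖f₁ z‖ ^ 2 := by simp [hNdef, hz0]
  have hne0 : N 0 ≠ 0 := by rw [hN0]; exact hne
  have hN₁d : HasDerivAt N₁
      (2 * (⟪f₀ z, v * (v * deriv (deriv f₀) z)⟫ + ⟪v * deriv f₀ z, v * deriv f₀ z⟫)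
        + 2 * (⟪f₁ z, v * (v * deriv (deriv f₁) z)⟫ + ⟪v * deriv f₁ z, v * deriv f₁ z⟫)) 0 := by
    have i0 := (HasDerivAt.inner ℝ (comp_line_hasDerivAt hf₀ z v 0 h0)
      ((comp_line_hasDerivAt hd₀ z v 0 h0).const_mul v)).const_mul 2
    have i1 := (HasDerivAt.inner ℝ (comp_line_hasDerivAt hf₁ z v 0 h0)
      ((comp_line_hasDerivAt hd₁ z v 0 h0).const_mul v)).const_mul 2
    have := i0.add i1
    rw [hz0] at this
    exact this
  have hev : ∀ᶠ t in nhds (0:ℝ), N t ≠ 0 ∧ t ∈ S :=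
    ((hN 0 h0).continuousAt.eventually_ne hne0).and (hS.mem_nhds h0)
  have hderiv_u : deriv (fun t => Real.log (N t)) =ᶠ[nhds (0:ℝ)] fun t => N₁ t / N t :=
    hev.mono fun t ht => ((hN t ht.2).log ht.1).deriv
  have hfinal := hN₁d.div (hN 0 h0) hne0
  have : iteratedDeriv 2 (fun t : ℝ => Real.log (N t)) 0
      = deriv (deriv fun t => Real.log (N t)) 0 := by
    rw [iteratedDeriv_succ, iteratedDeriv_one]
  rw [show (fun t : ℝ => Real.log (‖f₀ (z + t * v)‖ ^ 2 + ‖f₁ (z + t * v)‖ ^ 2))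
      = fun t => Real.log (N t) from rfl, this, hderiv_u.deriv_eq,
      (show deriv (fun t => N₁ t / N t) 0 = _ from hfinal.deriv), hN0]
  have hN₁0 : N₁ 0 = 2 * ⟪f₀ z, v * deriv f₀ z⟫ + 2 * ⟪f₁ z, v * deriv f₁ z⟫ := by
    simp [hN₁def, hz0]
  rw [hN₁0]
  ring

theorem local_plucker_formula_n_one
    (U : Set ℂ) (hU : IsOpen U) (f₀ f₁ : ℂ → ℂ)
    (hf₀ : DifferentiableOn ℂ f₀ U) (hf₁ : DifferentiableOn ℂ f₁ U) :
    ∀ z ∈ U, ‖f₀ z‖ ^ 2 + ‖f₁ z‖ ^ 2 ≠ 0 →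
      lap (fun w => Real.log (‖f₀ w‖ ^ 2 + ‖f₁ w‖ ^ 2)) z
        = 4 * ‖f₀ z * deriv f₁ z - deriv f₀ z * f₁ z‖ ^ 2
            / (‖f₀ z‖ ^ 2 + ‖f₁ z‖ ^ 2) ^ 2 := by
  intro z hz hne
  have hA₀ : AnalyticOnNhd ℂ f₀ U := hf₀.analyticOnNhd hU
  have hA₁ : AnalyticOnNhd ℂ f₁ U := hf₁.analyticOnNhd hU
  have hne' : ‖f₀ z‖ ^ 2 + ‖f₁ z‖ ^ 2 ≠ 0 := by simpa using hne
  have h1 := dir2 hU hA₀ hA₁ hz 1 hne'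
  have hI := dir2 hU hA₀ hA₁ hz Complex.I hne'
  have e1 : (fun x : ℝ => Real.log (‖f₀ (z + x)‖ ^ 2 + ‖f₁ (z + x)‖ ^ 2))
      = fun t : ℝ => Real.log (‖f₀ (z + t * 1)‖ ^ 2 + ‖f₁ (z + t * 1)‖ ^ 2) := by
    funext t; simp
  have e2 : (fun y : ℝ => Real.log
        (‖f₀ (z + y * Complex.I)‖ ^ 2 + ‖f₁ (z + y * Complex.I)‖ ^ 2))
      = fun t : ℝ => Real.log (‖f₀ (z + t * Complex.I)‖ ^ 2 + ‖f₁ (z + t * Complex.I)‖ ^ 2) := by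
    funext t; simp
  rw [lap, e1, e2, h1, hI]
  simp only [Complex.inner, Complex.sq_norm, Complex.normSq_apply,
    Complex.mul_re, Complex.mul_im, Complex.conj_re, Complex.conj_im, Complex.one_re,
    Complex.one_im, Complex.I_re, Complex.I_im, Complex.sub_re, Complex.sub_im] at hne' ⊢
  field_simp
  ring
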